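/- Let U° be a d_B² × d_A² complex matrix with ‖U°‖₂² = d_A d_B and d_B ≥ d_A. Then ‖Tr_B|U°†|‖₂² ≥ ‖U°‖₁²/d_B, i.e., the 'pretty good' hacking fidelity p_PG := ‖Tr_B|U°†|‖₂²/d_A³ satisfies p_PG ≥ p_ME := ‖U°‖₁²/(d_A³ d_B). -/

import Mathlib

open scoped BigOperators ComplexOrder Matrix

noncomputable def Matrix.PosSemidef.sqrt {n 𝕜 : Type*} [Fintype n] [RCLike 𝕜] [DecidableEq n]
    {A : Matrix n n 𝕜} (hA : A.PosSemidef) : Matrix n n 𝕜 :=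
  hA.1.eigenvectorUnitary.1 * Matrix.diagonal ((↑) ∘ (Real.sqrt ·) ∘ hA.1.eigenvalues) *
    (star hA.1.eigenvectorUnitary : Matrix n n 𝕜)

-- Hilbert–Schmidt (Frobenius) norm: `hsNorm A = √(Tr(AᴴA))`.
noncomputable def hsNorm {m n : Type*} [Fintype m] [Fintype n] (A : Matrix m n ℂ) : ℝ :=
  Real.sqrt ((Aᴴ * A).trace).re

-- Trace (Schatten-1) norm: `traceNorm A = Tr √(AᴴA)`.
noncomputable def traceNorm {m n : Type*} [Fintype m] [Fintype n] [DecidableEq n]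
    (A : Matrix m n ℂ) : ℝ :=
  ((Matrix.posSemidef_conjTranspose_mul_self A).sqrt.trace).re

-- Partial trace over the second tensor factor.
noncomputable def ptrace₂ {a b : Type*} [Fintype a] [Fintype b]
    (X : Matrix (a × b) (a × b) ℂ) : Matrix a a ℂ :=
  Matrix.of fun i j => ∑ k : b, X (i, k) (j, k)

-- Partial trace over the first tensor factor.
noncomputable def ptrace₁ {a b : Type*} [Fintype a] [Fintype b]
    (X : Matrix (a × b) (a × b) ℂ) : Matrix b b ℂ :=
  Matrix.of fun i j => ∑ k : a, X (k, i) (k, j)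

open Polynomial Matrix in
private lemma mtConjPow {n : Type*} [Fintype n] [DecidableEq n] (V : Matrix.unitaryGroup n ℂ)
    (D : Matrix n n ℂ) (k : ℕ) :
    ((V : Matrix n n ℂ) * D * star (V : Matrix n n ℂ)) ^ k
      = (V : Matrix n n ℂ) * D ^ k * star (V : Matrix n n ℂ) := by
  have h2 : star (V : Matrix n n ℂ) * (V : Matrix n n ℂ) = 1 :=
    (Matrix.mem_unitaryGroup_iff').mp V.2
  have h3 : ∀ X : Matrix n n ℂ, star (V : Matrix n n ℂ) * ((V : Matrix n n ℂ) * X) = X :=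
    fun X => by rw [← Matrix.mul_assoc, h2, Matrix.one_mul]
  induction k with
  | zero => simp [(Matrix.mem_unitaryGroup_iff).mp V.2]
  | succ k ih =>
    rw [pow_succ, pow_succ, ih]
    simp only [Matrix.mul_assoc, h3]

open Polynomial Matrix in
private lemma mtAevalConj {n : Type*} [Fintype n] [DecidableEq n] (V : Matrix.unitaryGroup n ℂ)
    (D : Matrix n n ℂ) (p : ℂ[X]) :
    aeval ((V : Matrix n n ℂ) * D * star (V : Matrix n n ℂ)) p
      = (V : Matrix n n ℂ) * aeval D p * star (V : Matrix n n ℂ) := by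
  induction p using Polynomial.induction_on' with
  | add p q hp hq => simp [map_add, hp, hq, Matrix.mul_add, Matrix.add_mul]
  | monomial k c =>
    simp [aeval_monomial, mtConjPow, Algebra.algebraMap_eq_smul_one, smul_mul_assoc,
      mul_smul_comm]

open Polynomial Matrix in
private lemma mtAevalDiag {n : Type*} [Fintype n] [DecidableEq n] (d : n → ℂ) (p : ℂ[X]) :
    aeval (Matrix.diagonal d) p = Matrix.diagonal (fun i => p.eval (d i)) := by
  have h1 : aeval ((Matrix.diagonalAlgHom ℂ : (n → ℂ) →ₐ[ℂ] Matrix n n ℂ) d) p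
      = (Matrix.diagonalAlgHom ℂ : (n → ℂ) →ₐ[ℂ] Matrix n n ℂ) (aeval d p) :=
    aeval_algHom_apply ((Matrix.diagonalAlgHom ℂ : (n → ℂ) →ₐ[ℂ] Matrix n n ℂ)) d p
  have h2 : (aeval d p : n → ℂ) = fun i => p.eval (d i) := by
    funext i
    have := aeval_algHom_apply (Pi.evalAlgHom ℂ (fun _ : n => ℂ) i) d p
    simpa [Polynomial.coe_aeval_eq_eval] using this.symm
  rw [h2] at h1
  exact h1

open Polynomial Matrix in
private lemma mtSqrtAeval {n : Type*} [Fintype n] [DecidableEq n] {M : Matrix n n ℂ}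
    (hM : M.PosSemidef) (p : ℂ[X])
    (hp : ∀ i, p.eval ((hM.1.eigenvalues i : ℝ) : ℂ) = ((Real.sqrt (hM.1.eigenvalues i) : ℝ) : ℂ)) :
    aeval M p = hM.sqrt := by
  conv_lhs => rw [hM.1.spectral_theorem, Unitary.conjStarAlgAut_apply]
  rw [mtAevalConj, mtAevalDiag, Matrix.PosSemidef.sqrt]
  have hd : (fun i => p.eval ((RCLike.ofReal ∘ hM.1.eigenvalues) i))
      = (RCLike.ofReal ∘ Real.sqrt ∘ hM.1.eigenvalues : n → ℂ) := by
    funext i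
    simpa using hp i
  rw [hd]

open Polynomial Matrix in
private lemma mtPowInt {m n : Type*} [Fintype m] [Fintype n] [DecidableEq m] [DecidableEq n] (A : Matrix m n ℂ)
    (B : Matrix n m ℂ) (k : ℕ) : A * (B * A) ^ k = (A * B) ^ k * A := by
  induction k with
  | zero => simp
  | succ k ih =>
    rw [pow_succ, pow_succ, ← Matrix.mul_assoc, ih]
    simp [Matrix.mul_assoc]

open Polynomial Matrix in
private lemma mtIntertwine {m n : Type*} [Fintype m] [Fintype n] [DecidableEq m] [DecidableEq n]
    (A : Matrix m n ℂ) (B : Matrix n m ℂ) (p : ℂ[X]) :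
    A * (aeval (B * A) p) = (aeval (A * B) p) * A := by
  induction p using Polynomial.induction_on' with
  | add p q hp hq => simp [map_add, hp, hq, Matrix.mul_add, Matrix.add_mul]
  | monomial k c =>
    simp [aeval_monomial, Algebra.algebraMap_eq_smul_one, smul_mul_assoc, mul_smul_comm,
      mtPowInt]

open Polynomial Matrix in
private lemma trace_aeval_comm {m n : Type*} [Fintype m] [Fintype n] [DecidableEq m]
    [DecidableEq n] (A : Matrix m n ℂ) (B : Matrix n m ℂ) (p : ℂ[X]) (hp : p.coeff 0 = 0) :
    (aeval (A * B) p).trace = (aeval (B * A) p).trace := by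
  have hX : X * p.divX = p := by
    have := Polynomial.X_mul_divX_add p
    rwa [hp, map_zero, add_zero] at this
  have h1 : aeval (A * B) p = (A * B) * aeval (A * B) p.divX := by
    rw [← hX, _root_.map_mul, aeval_X, hX]
  have h2 : aeval (B * A) p = (B * A) * aeval (B * A) p.divX := by
    rw [← hX, _root_.map_mul, aeval_X, hX]
  rw [h1, h2]
  calc (A * B * aeval (A * B) p.divX).trace
      = (A * (B * aeval (A * B) p.divX)).trace := by rw [Matrix.mul_assoc]
    _ = ((B * aeval (A * B) p.divX) * A).trace := Matrix.trace_mul_comm _ _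
    _ = (B * (aeval (A * B) p.divX * A)).trace := by rw [Matrix.mul_assoc]
    _ = (B * (A * aeval (B * A) p.divX)).trace := by rw [mtIntertwine]
    _ = (B * A * aeval (B * A) p.divX).trace := by rw [Matrix.mul_assoc]

open Polynomial Matrix in
theorem stmt_10 (dA dB : ℕ) (hAB : dA ≤ dB)
    (W : Matrix (Fin dB × Fin dB) (Fin dA × Fin dA) ℂ)
    (hW : hsNorm W ^ 2 = (dA : ℝ) * dB) :
    hsNorm (ptrace₁ ((Matrix.posSemidef_conjTranspose_mul_self Wᴴ).sqrt)) ^ 2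
      ≥ traceNorm W ^ 2 / dB ∧
    hsNorm (ptrace₁ ((Matrix.posSemidef_conjTranspose_mul_self Wᴴ).sqrt)) ^ 2 / (dA : ℝ) ^ 3
      ≥ traceNorm W ^ 2 / ((dA : ℝ) ^ 3 * dB) := by
  classical
  set hP := Matrix.posSemidef_conjTranspose_mul_self Wᴴ with hPdef
  set h1 := Matrix.posSemidef_conjTranspose_mul_self W with h1def
  set P := hP.sqrt with Pdef
  set Q := ptrace₁ P with Qdef
  -- the interpolation polynomial
  set s : Finset ℝ := insert 0 ((Finset.univ.image h1.1.eigenvalues) ∪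
      (Finset.univ.image hP.1.eigenvalues)) with sdef
  set q0 : ℝ[X] := Lagrange.interpolate s id Real.sqrt with q0def
  set q : ℂ[X] := q0.map (algebraMap ℝ ℂ) with qdef
  have hqx : ∀ x ∈ s, q.eval (x : ℂ) = ((Real.sqrt x : ℝ) : ℂ) := by
    intro x hx
    have h := Lagrange.eval_interpolate_at_node (v := id) (r := Real.sqrt)
      (Set.injOn_id _) hx
    rw [qdef, Polynomial.eval_map]
    have h2 := Polynomial.eval₂_at_apply (algebraMap ℝ ℂ) x (p := q0)
    simp only [Complex.coe_algebraMap] at h2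
    rw [h2]
    exact congrArg Complex.ofReal h
  have h0s : (0:ℝ) ∈ s := by rw [sdef]; exact Finset.mem_insert_self _ _
  have hq0 : q.coeff 0 = 0 := by
    have h := hqx 0 h0s
    rw [Polynomial.coeff_zero_eq_eval_zero]
    simpa using h
  have e1 : aeval (Wᴴ * W) q = h1.sqrt := by
    apply mtSqrtAeval
    intro i
    exact hqx _ (by
      apply Finset.mem_insert_of_mem
      exact Finset.mem_union_left _ (Finset.mem_image_of_mem _ (Finset.mem_univ i)))
  have e2 : aeval (Wᴴᴴ * Wᴴ) q = P := by
    apply mtSqrtAeval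
    intro i
    exact hqx _ (by
      apply Finset.mem_insert_of_mem
      exact Finset.mem_union_right _ (Finset.mem_image_of_mem _ (Finset.mem_univ i)))
  have htr : P.trace = h1.sqrt.trace := by
    rw [← e1, ← e2, Matrix.conjTranspose_conjTranspose]
    exact trace_aeval_comm W Wᴴ q hq0
  -- trace of partial trace
  have htrQ : Q.trace = P.trace := by
    rw [Qdef]
    simp only [Matrix.trace, Matrix.diag, ptrace₁, Matrix.of_apply]
    rw [Fintype.sum_prod_type]
    exact Finset.sum_comm
  have hT : traceNorm W = Q.trace.re := by
    rw [htrQ, htr]; rfl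
  -- express things as real sums
  have hTsum : Q.trace.re = ∑ i : Fin dB, (Q i i).re := by
    simp [Matrix.trace, Matrix.diag, Complex.re_sum]
  have hhs : hsNorm Q ^ 2 = ∑ i : Fin dB, ∑ j : Fin dB, Complex.normSq (Q i j) := by
    have h0 : ((Qᴴ * Q).trace).re = ∑ i : Fin dB, ∑ j : Fin dB, Complex.normSq (Q i j) := by
      simp only [Matrix.trace, Matrix.diag, Matrix.mul_apply, Matrix.conjTranspose_apply,
        Complex.re_sum]
      rw [Finset.sum_comm]
      refine Finset.sum_congr rfl fun i _ => Finset.sum_congr rfl fun j _ => ?_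
      simp [Complex.normSq_apply, Complex.mul_re]
    have hnn : 0 ≤ ((Qᴴ * Q).trace).re := by
      rw [h0]
      exact Finset.sum_nonneg fun i _ => Finset.sum_nonneg fun j _ => Complex.normSq_nonneg _
    rw [hsNorm, Real.sq_sqrt hnn, h0]
  have key : Q.trace.re ^ 2 ≤ (dB : ℝ) * hsNorm Q ^ 2 := by
    rw [hTsum, hhs]
    calc (∑ i : Fin dB, (Q i i).re) ^ 2
        ≤ (Finset.univ : Finset (Fin dB)).card * ∑ i : Fin dB, (Q i i).re ^ 2 :=
          sq_sum_le_card_mul_sum_sq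
      _ = (dB : ℝ) * ∑ i : Fin dB, (Q i i).re ^ 2 := by simp
      _ ≤ (dB : ℝ) * ∑ i : Fin dB, ∑ j : Fin dB, Complex.normSq (Q i j) := by
          apply mul_le_mul_of_nonneg_left _ (Nat.cast_nonneg dB)
          apply Finset.sum_le_sum
          intro i _
          calc (Q i i).re ^ 2 ≤ Complex.normSq (Q i i) := by
                rw [Complex.normSq_apply]; nlinarith [sq_nonneg (Q i i).im]
            _ ≤ ∑ j : Fin dB, Complex.normSq (Q i j) :=
              Finset.single_le_sum (fun j _ => Complex.normSq_nonneg _) (Finset.mem_univ i)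
  have hsnn : 0 ≤ hsNorm Q ^ 2 := by
    rw [hhs]
    exact Finset.sum_nonneg fun i _ => Finset.sum_nonneg fun j _ => Complex.normSq_nonneg _
  have main : traceNorm W ^ 2 / dB ≤ hsNorm Q ^ 2 := by
    rcases Nat.eq_zero_or_pos dB with h | h
    · subst h
      simpa using hsnn
    · rw [div_le_iff₀ (by exact_mod_cast h), hT]
      linarith [key]
  constructor
  · exact main
  · rw [ge_iff_le, show ((dA:ℝ)^3 * dB) = (dB : ℝ) * (dA:ℝ)^3 by ring, ← div_div]
    gcongr
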